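/- Suppose the rate-distortion function R(D) is strictly convex on (0, D_max). If the degeneracy condition holds at infinitely many D ∈ (0, D_max), then P is the uniform distribution on A and ρ is a permutation distortion measure. -/

import Mathlib

open Real Finset

/-- `Q` is a probability mass function on `Fin k`. -/
def IsPmf {k : ℕ} (Q : Fin k → ℝ) : Prop := (∀ j, 0 ≤ Q j) ∧ ∑ j, Q j = 1

/-- `Λ_{P,Q}(λ) = Σ_i P_i · ln (Σ_j Q_j e^{λ ρ_ij})`. -/
noncomputable def Lam {k : ℕ} (P : Fin k → ℝ) (ρ : Fin k → Fin k → ℝ)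
    (Q : Fin k → ℝ) (l : ℝ) : ℝ :=
  ∑ i, P i * Real.log (∑ j, Q j * Real.exp (l * ρ i j))

/-- The cost `Σ_{i,j} P_i W_ij log₂ (W_ij / Q_j)` of a transition matrix `W`, with the
conventions `0 · log 0 = 0` (automatic in Lean since `Real.log 0 = 0`) and value `⊤`
if `W i j > 0` for some `j` with `Q j = 0`. -/
noncomputable def wCost {k : ℕ} (P Q : Fin k → ℝ) (W : Fin k → Fin k → ℝ) : EReal :=
  if ∀ i j, 0 < W i j → 0 < Q j then
    (((∑ i, ∑ j, P i * W i j * Real.logb 2 (W i j / Q j)) : ℝ) : EReal)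
  else ⊤

/-- `R(P,Q,D)`: infimum over row-stochastic matrices `W` with
`Σ_{i,j} P_i W_ij ρ_ij ≤ D` of the relative-entropy cost. -/
noncomputable def RPQ {k : ℕ} (P : Fin k → ℝ) (ρ : Fin k → Fin k → ℝ)
    (Q : Fin k → ℝ) (D : ℝ) : EReal :=
  ⨅ W ∈ {W : Fin k → Fin k → ℝ | (∀ i j, 0 ≤ W i j) ∧ (∀ i, ∑ j, W i j = 1) ∧
      ∑ i, ∑ j, P i * W i j * ρ i j ≤ D}, wCost P Q W

/-- The rate-distortion function `R(D) = inf_Q R(P,Q,D)`. -/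
noncomputable def RofD {k : ℕ} (P : Fin k → ℝ) (ρ : Fin k → Fin k → ℝ) (D : ℝ) : EReal :=
  ⨅ Q ∈ {Q : Fin k → ℝ | IsPmf Q}, RPQ P ρ Q D

/-- `D_max = min_j Σ_i P_i ρ_ij`. -/
noncomputable def Dmax {k : ℕ} (P : Fin k → ℝ) (ρ : Fin k → Fin k → ℝ) : ℝ :=
  sInf (Set.range fun j => ∑ i, P i * ρ i j)

/-- `ρ` is a permutation distortion measure: all rows of `(ρ_ij)` are permutations
of one another. -/
def IsPermMeasure {k : ℕ} (ρ : Fin k → Fin k → ℝ) : Prop :=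
  ∀ i i' : Fin k, ∃ σ : Equiv.Perm (Fin k), ∀ j, ρ i' j = ρ i (σ j)

/-- The degeneracy condition at distortion level `D`: there are a pmf `Q*` achieving
`R(P,Q*,D) = R(D)` and `λ* < 0` with `Λ'_{P,Q*}(λ*) = D`,
`λ*·D − Λ_{P,Q*}(λ*) = (ln 2)·R(D)`, and `Σ_j Q*_j e^{λ* ρ_ij}` independent of `i`. -/
def DegenAt {k : ℕ} (P : Fin k → ℝ) (ρ : Fin k → Fin k → ℝ) (D : ℝ) : Prop :=
  ∃ Q : Fin k → ℝ, IsPmf Q ∧ RPQ P ρ Q D = RofD P ρ D ∧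
    ∃ l : ℝ, l < 0 ∧ HasDerivAt (Lam P ρ Q) D l ∧
      ((l * D - Lam P ρ Q l : ℝ) : EReal) = (Real.log 2 : EReal) * RofD P ρ D ∧
      ∃ c : ℝ, ∀ i, ∑ j, Q j * Real.exp (l * ρ i j) = c


open Filter Topology

noncomputable def Sfun {k : ℕ} (P : Fin k → ℝ) (ρ : Fin k → Fin k → ℝ) (j : Fin k) (x : ℝ) : ℝ :=
  ∑ i, P i * Real.exp (x * ρ i j)


lemma gibbs_eq {k : ℕ} {u v : Fin k → ℝ} (hu0 : ∀ j, 0 ≤ u j) (hv0 : ∀ j, 0 ≤ v j)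
    (hu1 : ∑ j, u j = 1) (hv1 : ∑ j, v j = 1) (hsupp : ∀ j, 0 < u j → 0 < v j)
    (h : 0 ≤ ∑ j, u j * Real.log (v j / u j)) : ∀ j, u j = v j := by
  have key : ∀ j, u j * Real.log (v j / u j) ≤ v j - u j := by
    intro j
    rcases eq_or_lt_of_le (hu0 j) with h0 | h0
    · simp [← h0]; exact hv0 j
    · have hv := hsupp j h0
      have hx : 0 < v j / u j := div_pos hv h0
      have hlog := Real.log_le_sub_one_of_pos hx
      have h2 : u j * Real.log (v j / u j) ≤ u j * (v j / u j - 1) := by nlinarith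
      calc u j * Real.log (v j / u j) ≤ u j * (v j / u j - 1) := h2
        _ = v j - u j := by field_simp
  have hzero : ∑ j, (v j - u j - u j * Real.log (v j / u j)) = - ∑ j, u j * Real.log (v j / u j) := by
    rw [Finset.sum_sub_distrib, Finset.sum_sub_distrib, hu1, hv1]; ring
  have hterm : ∀ j ∈ univ, (0:ℝ) ≤ v j - u j - u j * Real.log (v j / u j) := by
    intro j _; linarith [key j]
  have hsum0 : ∑ j, (v j - u j - u j * Real.log (v j / u j)) = 0 := by
    have h1 : ∑ j, (v j - u j - u j * Real.log (v j / u j)) ≤ 0 := by rw [hzero]; linarith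
    have h2 : 0 ≤ ∑ j, (v j - u j - u j * Real.log (v j / u j)) := Finset.sum_nonneg hterm
    linarith
  have heach := (Finset.sum_eq_zero_iff_of_nonneg hterm).mp hsum0
  intro j
  have hj := heach j (mem_univ j)
  rcases eq_or_lt_of_le (hu0 j) with h0 | h0
  · simp [← h0] at hj ⊢; exact hj.symm
  · by_contra hne
    have hv := hsupp j h0
    have hx : 0 < v j / u j := div_pos hv h0
    have hx1 : v j / u j ≠ 1 := by
      intro h1
      rw [div_eq_one_iff_eq (ne_of_gt h0)] at h1
      exact hne h1.symm
    have hstrict := Real.log_lt_sub_one_of_pos hx hx1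
    have h3 : u j * Real.log (v j / u j) < u j * (v j / u j - 1) := by nlinarith
    have heq : u j * (v j / u j - 1) = v j - u j := by field_simp
    nlinarith

lemma expsum_eq_zero : ∀ (T : Finset ℝ) (a : ℝ → ℝ),
    (∃ᶠ x in atBot, ∑ t ∈ T, a t * Real.exp (t * x) = 0) → ∀ t ∈ T, a t = 0 := by
  intro T
  induction T using Finset.strongInduction with
  | _ T ih =>
    intro a hfreq t ht
    have hne : T.Nonempty := ⟨t, ht⟩
    set t₀ := T.min' hne with ht₀
    have ht₀T : t₀ ∈ T := T.min'_mem hne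
    have hprod : ∀ x : ℝ, (∑ s ∈ T, a s * Real.exp (s * x)) * Real.exp (-(t₀ * x))
        = ∑ s ∈ T, a s * Real.exp ((s - t₀) * x) := by
      intro x
      rw [Finset.sum_mul]
      refine Finset.sum_congr rfl fun s _ => ?_
      rw [mul_assoc, ← Real.exp_add]; ring_nf
    have hlim : Tendsto (fun x => ∑ s ∈ T, a s * Real.exp ((s - t₀) * x)) atBot
        (𝓝 (∑ s ∈ T, if s = t₀ then a s else 0)) := by
      apply tendsto_finset_sum
      intro s hs
      by_cases hst : s = t₀
      · simp only [hst, if_true, sub_self, zero_mul, Real.exp_zero, mul_one]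
        exact tendsto_const_nhds
      · simp only [hst, if_false]
        have hpos : 0 < s - t₀ := by
          have hle : t₀ ≤ s := T.min'_le s hs
          rcases lt_or_eq_of_le hle with h | h
          · linarith
          · exact absurd h.symm hst
        have h1 : Tendsto (fun x : ℝ => (s - t₀) * x) atBot atBot :=
          (tendsto_const_mul_atBot_of_pos hpos).mpr tendsto_id
        have h2 : Tendsto (fun x => Real.exp ((s - t₀) * x)) atBot (𝓝 0) :=
          Real.tendsto_exp_atBot.comp h1
        have := h2.const_mul (a s)
        simpa using this
    have ha0 : a t₀ = 0 := by
      have hfreq' : ∃ᶠ x in atBot, (∑ s ∈ T, a s * Real.exp ((s - t₀) * x)) = 0 := by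
        refine hfreq.mono fun x hx => ?_
        rw [← hprod, hx, zero_mul]
      have hval : (∑ s ∈ T, if s = t₀ then a s else 0) = a t₀ := by
        rw [Finset.sum_ite_eq' T t₀ a]; simp [ht₀T]
      have := tendsto_nhds_unique_of_frequently_eq hlim tendsto_const_nhds hfreq'
      rw [hval] at this; exact this
    by_cases htt : t = t₀
    · rw [htt]; exact ha0
    · have hfreq2 : ∃ᶠ x in atBot, ∑ s ∈ T.erase t₀, a s * Real.exp (s * x) = 0 := by
        refine hfreq.mono fun x hx => ?_
        have h5 := Finset.add_sum_erase T (fun s => a s * Real.exp (s * x)) ht₀T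
        simp only [ha0, zero_mul, zero_add] at h5
        rw [h5]; exact hx
      exact ih (T.erase t₀) (Finset.erase_ssubset ht₀T) a hfreq2 t (Finset.mem_erase.mpr ⟨htt, ht⟩)

lemma group_expsum {k : ℕ} (P : Fin k → ℝ) (f : Fin k → ℝ) (T : Finset ℝ) (hT : ∀ i, f i ∈ T) (x : ℝ) :
    ∑ i, P i * Real.exp (x * f i)
      = ∑ t ∈ T, (∑ i ∈ univ.filter (fun i => f i = t), P i) * Real.exp (t * x) := by
  rw [← Finset.sum_fiberwise_of_maps_to (g := f) (fun i _ => hT i)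
    (f := fun i => P i * Real.exp (x * f i))]
  refine Finset.sum_congr rfl fun t _ => ?_
  rw [Finset.sum_mul]
  refine Finset.sum_congr rfl fun i hi => ?_
  rw [Finset.mem_filter] at hi
  rw [hi.2, mul_comm x t]

lemma exists_perm_of_fiber_card {k : ℕ} (f g : Fin k → ℝ)
    (h : ∀ t, (univ.filter (fun j => f j = t)).card = (univ.filter (fun j => g j = t)).card) :
    ∃ σ : Equiv.Perm (Fin k), ∀ j, g j = f (σ j) := by
  classical
  have e : ∀ t, {a // g a = t} ≃ {b // f b = t} := fun t =>
    Fintype.equivOfCardEq (by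
      rw [Fintype.card_subtype, Fintype.card_subtype]; exact (h t).symm)
  exact ⟨Equiv.ofFiberEquiv e, fun j => (Equiv.ofFiberEquiv_map e j).symm⟩

lemma pmf_exists_pos {k : ℕ} {Q : Fin k → ℝ} (hQ : IsPmf Q) : ∃ j, 0 < Q j := by
  by_contra hno
  push_neg at hno
  have : ∑ j, Q j ≤ 0 := Finset.sum_nonpos fun j _ => hno j
  rw [hQ.2] at this; linarith

lemma analytic_Sdiff {k : ℕ} (P : Fin k → ℝ) (ρ : Fin k → Fin k → ℝ) (j j' : Fin k) :
    AnalyticOnNhd ℝ (fun x => Sfun P ρ j x - Sfun P ρ j' x) Set.univ := by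
  unfold Sfun
  apply AnalyticOnNhd.sub <;>
  · apply Finset.analyticOnNhd_fun_sum
    intro i _
    exact analyticOnNhd_const.mul (analyticOnNhd_rexp.comp
      (analyticOnNhd_id.mul analyticOnNhd_const) (Set.mapsTo_univ _ _))

lemma exists_ordered {p : ℝ → Prop} {a b c : ℝ} (hab : a ≠ b) (hac : a ≠ c) (hbc : b ≠ c)
    (ha : p a) (hb : p b) (hc : p c) :
    ∃ x y z : ℝ, p x ∧ p y ∧ p z ∧ x < y ∧ y < z := by
  rcases lt_trichotomy a b with h1 | h1 | h1
  · rcases lt_trichotomy b c with h2 | h2 | h2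
    · exact ⟨a, b, c, ha, hb, hc, h1, h2⟩
    · exact absurd h2 hbc
    · rcases lt_trichotomy a c with h3 | h3 | h3
      · exact ⟨a, c, b, ha, hc, hb, h3, h2⟩
      · exact absurd h3 hac
      · exact ⟨c, a, b, hc, ha, hb, h3, h1⟩
  · exact absurd h1 hab
  · rcases lt_trichotomy a c with h2 | h2 | h2
    · exact ⟨b, a, c, hb, ha, hc, h1, h2⟩
    · exact absurd h2 hac
    · rcases lt_trichotomy b c with h3 | h3 | h3
      · exact ⟨b, c, a, hb, hc, ha, h3, h2⟩
      · exact absurd h3 hbc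
      · exact ⟨c, b, a, hc, hb, ha, h3, h1⟩

lemma no_three_collinear {s : Set ℝ} {f : ℝ → ℝ} (hconv : StrictConvexOn ℝ s f)
    {x y z l L C : ℝ} (hL : 0 < L) (hx : x ∈ s) (hy : y ∈ s) (hz : z ∈ s)
    (hxy : x < y) (hyz : y < z)
    (hfx : f x = (l * x - C)/L) (hfy : f y = (l * y - C)/L) (hfz : f z = (l * z - C)/L) :
    False := by
  set a := (z - y)/(z - x) with hadef
  set b := (y - x)/(z - x) with hbdef
  have hzx : 0 < z - x := by linarith
  have ha : 0 < a := div_pos (by linarith) hzx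
  have hb : 0 < b := div_pos (by linarith) hzx
  have hab : a + b = 1 := by rw [hadef, hbdef]; field_simp; ring
  have hcomb : a * x + b * z = y := by
    rw [hadef, hbdef]; field_simp; ring
  have hlt := hconv.2 hx hz (by linarith : x ≠ z) ha hb hab
  rw [smul_eq_mul, smul_eq_mul, smul_eq_mul, smul_eq_mul, hcomb, hfx, hfy, hfz] at hlt
  have heq : a * ((l*x - C)/L) + b * ((l*z - C)/L) = (l * y - C)/L := by
    have h1 : a * ((l*x - C)/L) + b * ((l*z - C)/L) = (l * (a*x + b*z) - (a+b)*C)/L := by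
      field_simp; ring
    rw [h1, hcomb, hab, one_mul]
  rw [heq] at hlt
  exact lt_irrefl _ hlt

lemma full_support {k : ℕ} (ρ : Fin k → Fin k → ℝ)
    (hρzero : ∀ i j, ρ i j = 0 ↔ i = j)
    {Q : Fin k → ℝ} (hQ : IsPmf Q) {l c r : ℝ} (hl : l < 0)
    (hrow : ∀ i, ∑ j, Q j * Real.exp (l * ρ i j) = c)
    (hr : 0 < r) (hrle : ∀ i j, i ≠ j → r ≤ ρ i j)
    (hsmall : Real.exp (l * r) < 1 / k) : ∀ j, 0 < Q j := by
  have hk0 : 0 < (k:ℝ) := by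
    rcases Nat.eq_zero_or_pos k with h | h
    · exfalso
      rw [h] at hsmall
      norm_num at hsmall
      linarith [Real.exp_pos (l * r)]
    · exact_mod_cast h
  have hck : 1 ≤ (k:ℝ) * c := by
    have h1 : ∀ i, Q i ≤ ∑ j, Q j * Real.exp (l * ρ i j) := by
      intro i
      have hdiag : Q i * Real.exp (l * ρ i i) = Q i := by
        rw [(hρzero i i).mpr rfl]; simp
      calc Q i = Q i * Real.exp (l * ρ i i) := hdiag.symm
        _ ≤ ∑ j, Q j * Real.exp (l * ρ i j) :=
          Finset.single_le_sum (f := fun j => Q j * Real.exp (l * ρ i j))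
            (fun j _ => mul_nonneg (hQ.1 j) (Real.exp_pos _).le) (Finset.mem_univ i)
    calc (1:ℝ) = ∑ i, Q i := hQ.2.symm
      _ ≤ ∑ _i : Fin k, c := Finset.sum_le_sum (fun i _ => (h1 i).trans_eq (hrow i))
      _ = (k:ℝ) * c := by rw [Finset.sum_const, Finset.card_univ, Fintype.card_fin, nsmul_eq_mul]
  intro j
  have h2 : c ≤ Q j + Real.exp (l * r) := by
    have hdiag : Q j * Real.exp (l * ρ j j) = Q j := by
      rw [(hρzero j j).mpr rfl]; simp
    have hrest : ∑ j' ∈ univ.erase j, Q j' * Real.exp (l * ρ j j') ≤ Real.exp (l * r) := by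
      have hstep : ∑ j' ∈ univ.erase j, Q j' * Real.exp (l * ρ j j')
          ≤ ∑ j' ∈ univ.erase j, Q j' * Real.exp (l * r) := by
        refine Finset.sum_le_sum fun j' hj' => ?_
        have hne : j ≠ j' := fun h => (Finset.mem_erase.mp hj').1 h.symm
        have hexp : Real.exp (l * ρ j j') ≤ Real.exp (l * r) := by
          apply Real.exp_le_exp.mpr
          have := hrle j j' hne
          nlinarith
        exact mul_le_mul_of_nonneg_left hexp (hQ.1 j')
      have hsum1 : ∑ j' ∈ univ.erase j, Q j' ≤ 1 := by
        rw [← hQ.2]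
        exact Finset.sum_le_sum_of_subset_of_nonneg (Finset.subset_univ _)
          (fun i _ _ => hQ.1 i)
      calc ∑ j' ∈ univ.erase j, Q j' * Real.exp (l * ρ j j')
          ≤ ∑ j' ∈ univ.erase j, Q j' * Real.exp (l * r) := hstep
        _ = (∑ j' ∈ univ.erase j, Q j') * Real.exp (l * r) := (Finset.sum_mul _ _ _).symm
        _ ≤ 1 * Real.exp (l * r) := by nlinarith [Real.exp_pos (l * r)]
        _ = Real.exp (l * r) := one_mul _
    calc c = ∑ j', Q j' * Real.exp (l * ρ j j') := (hrow j).symm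
      _ = Q j * Real.exp (l * ρ j j) + ∑ j' ∈ univ.erase j, Q j' * Real.exp (l * ρ j j') :=
        (Finset.add_sum_erase _ _ (Finset.mem_univ j)).symm
      _ ≤ Q j + Real.exp (l * r) := by rw [hdiag]; linarith
  have hc1k : 1/(k:ℝ) ≤ c := by
    rw [div_le_iff₀ hk0]; linarith
  linarith

lemma tendsto_det_exp {n : Type*} [Fintype n] [DecidableEq n] (f : n → n → ℝ)
    (h0 : ∑ b, f b b = 0)
    (hpos : ∀ σ : Equiv.Perm n, σ ≠ 1 → 0 < ∑ b, f (σ b) b) :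
    Tendsto (fun t => (Matrix.of fun a b => Real.exp (t * f a b)).det) atBot (𝓝 1) := by
  have hrw : ∀ t : ℝ, (Matrix.of fun a b => Real.exp (t * f a b)).det
      = ∑ σ : Equiv.Perm n, ((Equiv.Perm.sign σ : ℤ) : ℝ) * Real.exp (t * ∑ b, f (σ b) b) := by
    intro t
    rw [Matrix.det_apply]
    refine Finset.sum_congr rfl fun σ _ => ?_
    rw [Finset.mul_sum, Real.exp_sum]
    simp [Matrix.of_apply, Units.smul_def, zsmul_eq_mul]
  have h2 : Tendsto (fun t => ∑ σ : Equiv.Perm n, ((Equiv.Perm.sign σ : ℤ) : ℝ)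
      * Real.exp (t * ∑ b, f (σ b) b)) atBot
      (𝓝 (∑ σ : Equiv.Perm n, if σ = 1 then 1 else 0)) := by
    apply tendsto_finset_sum
    intro σ _
    by_cases h1 : σ = 1
    · subst h1
      simp only [Equiv.Perm.one_apply, h0, mul_zero, Real.exp_zero, mul_one, eq_self_iff_true,
        if_true, Equiv.Perm.sign_one, Units.val_one, Int.cast_one]
      exact tendsto_const_nhds
    · simp only [h1, if_false]
      have hp := hpos σ h1
      have hmul : Tendsto (fun t : ℝ => t * (∑ b, f (σ b) b)) atBot atBot :=
        (tendsto_mul_const_atBot_of_pos hp).mpr tendsto_id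
      have h3 := Real.tendsto_exp_atBot.comp hmul
      have h4 := h3.const_mul (((Equiv.Perm.sign σ : ℤ) : ℝ))
      simpa using h4
  have h5 : (∑ σ : Equiv.Perm n, if σ = 1 then (1:ℝ) else 0) = 1 := by simp
  rw [h5] at h2
  exact Tendsto.congr (fun t => (hrw t).symm) h2

set_option maxHeartbeats 1000000 in
lemma no_partial_support {k : ℕ} (ρ : Fin k → Fin k → ℝ)
    (hρnn : ∀ i j, 0 ≤ ρ i j) (hρzero : ∀ i j, ρ i j = 0 ↔ i = j)
    (b₀ : Finset (Fin k)) (hb₀ : b₀ ≠ univ)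
    (lam : ℕ → ℝ) (lstar : ℝ) (hten : Tendsto lam atTop (𝓝[≠] lstar))
    (x : ℕ → Fin k → ℝ)
    (hsol : ∀ n i, ∑ j ∈ b₀, x n j * Real.exp (lam n * ρ i j) = 1) : False := by
  classical
  obtain ⟨istar, histar⟩ : ∃ i, i ∉ b₀ := by
    by_contra h; push_neg at h; exact hb₀ (Finset.eq_univ_iff_forall.mpr h)
  set B := {j // j ∈ b₀} with hB
  -- entries of the augmented matrix
  set ent : ℝ → Option B → Option B → ℝ := fun t r c =>
    Option.elim c 1 (fun j => Real.exp (t * ρ (Option.elim r istar (fun b => (b:Fin k))) (j:Fin k)))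
    with hent
  set g : ℝ → ℝ := fun t => (Matrix.of (ent t)).det with hgdef
  have hg0 : ∀ n, g (lam n) = 0 := by
    intro n
    refine Matrix.exists_mulVec_eq_zero_iff.mp
      ⟨fun c => Option.elim c (-1) (fun j => x n (j : Fin k)), ?_, ?_⟩
    · intro h
      have := congrFun h none
      simp [Option.elim] at this
    · funext r
      show (∑ c : Option B, Matrix.of (ent (lam n)) r c
        * (Option.elim c (-1) fun j => x n (j:Fin k))) = 0
      rw [univ_option, Finset.sum_insertNone]
      have hnone : Matrix.of (ent (lam n)) r none
          * (Option.elim (none : Option B) (-1) fun j => x n (j:Fin k)) = -1 := by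
        simp [hent]
      have hsome : ∀ j : B, Matrix.of (ent (lam n)) r (some j)
          * (Option.elim (some j) (-1) fun j' => x n (j':Fin k))
          = x n (j:Fin k) * Real.exp (lam n * ρ (Option.elim r istar (fun b => (b:Fin k))) (j:Fin k)) := by
        intro j; simp [hent]; ring
      rw [hnone, Finset.sum_congr rfl fun j _ => hsome j, Finset.sum_coe_sort b₀
        (fun j => x n j * Real.exp (lam n * ρ (Option.elim r istar (fun b => (b:Fin k))) j)),
        hsol n _]
      ring
  -- g is analytic
  have hgrw : ∀ t : ℝ, g t = ∑ σ : Equiv.Perm (Option B), ((Equiv.Perm.sign σ : ℤ) : ℝ)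
      * ∏ r : Option B, ent t (σ r) r := by
    intro t
    rw [hgdef]
    simp only
    rw [Matrix.det_apply]
    refine Finset.sum_congr rfl fun σ _ => ?_
    simp [Units.smul_def, zsmul_eq_mul]
  have hana : AnalyticOnNhd ℝ g Set.univ := by
    rw [show g = fun t => ∑ σ : Equiv.Perm (Option B), ((Equiv.Perm.sign σ : ℤ) : ℝ)
      * ∏ r : Option B, ent t (σ r) r from funext hgrw]
    apply Finset.analyticOnNhd_fun_sum
    intro σ _
    apply AnalyticOnNhd.mul analyticOnNhd_const
    apply Finset.analyticOnNhd_fun_prod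
    intro r _
    cases r with
    | none => exact analyticOnNhd_const
    | some j =>
      show AnalyticOnNhd ℝ (fun t => Real.exp
        (t * ρ (Option.elim (σ (some j)) istar (fun b => (b:Fin k))) (j:Fin k))) Set.univ
      exact analyticOnNhd_rexp.comp (analyticOnNhd_id.mul analyticOnNhd_const)
        (Set.mapsTo_univ _ _)
  have hfreq : ∃ᶠ z in 𝓝[≠] lstar, g z = 0 := hten.frequently (Frequently.of_forall hg0)
  have hgzero : ∀ t : ℝ, g t = 0 := by
    intro t
    have := hana.eqOn_zero_of_preconnected_of_frequently_eq_zero isPreconnected_univ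
      (Set.mem_univ lstar) hfreq (Set.mem_univ t)
    simpa using this
  -- the square system
  set Sq : ℝ → Matrix B B ℝ := fun t =>
    Matrix.of fun a b : B => Real.exp (t * ρ (a:Fin k) (b:Fin k)) with hSq
  have hdlim : Tendsto (fun t => (Sq t).det) atBot (𝓝 1) := by
    apply tendsto_det_exp (fun a b : B => ρ (a:Fin k) (b:Fin k))
    · exact Finset.sum_eq_zero fun b _ => (hρzero _ _).mpr rfl
    · intro σ hσ
      obtain ⟨b, hb⟩ : ∃ b : B, σ b ≠ b := by
        by_contra hall; push_neg at hall
        exact hσ (Equiv.ext fun x => (hall x).trans (Equiv.Perm.one_apply x).symm)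
      refine Finset.sum_pos' (fun b _ => hρnn _ _) ⟨b, Finset.mem_univ b, ?_⟩
      have hne : ((σ b : B) : Fin k) ≠ (b : Fin k) := fun h => hb (Subtype.coe_injective h)
      exact lt_of_le_of_ne (hρnn _ _) (fun h => hne ((hρzero _ _).mp h.symm))
  have hwlim : ∀ j : B, Tendsto (fun t => (Sq t).cramer 1 j) atBot (𝓝 1) := by
    intro j
    have hupd : ∀ t : ℝ, (Sq t).updateCol j 1
        = Matrix.of (fun a b : B =>
          Real.exp (t * (if b = j then 0 else ρ (a:Fin k) (b:Fin k)))) := by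
      intro t; ext a b
      by_cases hbj : b = j
      · simp [Matrix.updateCol_apply, hbj]
      · simp [Matrix.updateCol_apply, hbj, hSq]
    have heqfun : (fun t => (Sq t).cramer 1 j) = fun t => (Matrix.of (fun a b : B =>
        Real.exp (t * (if b = j then 0 else ρ (a:Fin k) (b:Fin k))))).det := by
      funext t; rw [Matrix.cramer_apply, hupd]
    rw [heqfun]
    apply tendsto_det_exp
    · refine Finset.sum_eq_zero fun b _ => ?_
      by_cases hbj : b = j
      · simp [hbj]
      · simp [hbj, (hρzero (b:Fin k) (b:Fin k)).mpr rfl]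
    · intro σ hσ
      obtain ⟨b, hbb, hbj⟩ : ∃ b : B, σ b ≠ b ∧ b ≠ j := by
        by_contra hall
        push_neg at hall
        apply hσ
        have hfix : ∀ b : B, b ≠ j → σ b = b := by
          intro b hbj; by_contra hc; exact hbj (hall b hc)
        have hj : σ j = j := by
          by_contra hc
          have h2 : σ (σ j) = σ j := hfix (σ j) hc
          exact hc (σ.injective h2)
        refine Equiv.ext fun b => ?_
        rw [Equiv.Perm.one_apply]
        by_cases hbj : b = j
        · rw [hbj]; exact hj
        · exact hfix b hbj
      refine Finset.sum_pos' (fun b _ => ?_) ⟨b, Finset.mem_univ b, ?_⟩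
      · by_cases h : b = j
        · simp [h]
        · simp only [h, if_false]; exact hρnn _ _
      · simp only [hbj, if_false]
        have hne : ((σ b : B) : Fin k) ≠ (b : Fin k) := fun h => hbb (Subtype.coe_injective h)
        exact lt_of_le_of_ne (hρnn _ _) (fun h => hne ((hρzero _ _).mp h.symm))
  -- eventual key identity
  have hev : ∀ᶠ t in atBot, (Sq t).det ≠ 0 := hdlim.eventually_ne one_ne_zero
  have hkey : ∀ᶠ t in atBot, (∑ j : B, (Sq t).cramer 1 j * Real.exp (t * ρ istar (j:Fin k)))
      = (Sq t).det := by
    filter_upwards [hev] with t hdt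
    obtain ⟨v, hv0, hker⟩ := Matrix.exists_mulVec_eq_zero_iff.mpr (hgzero t)
    have hrow : ∀ r : Option B, (∑ c : Option B, ent t r c * v c) = 0 := by
      intro r
      have h := congrFun hker r
      simpa [Matrix.mulVec, dotProduct] using h
    have hsplit : ∀ r : Option B, v none + (∑ j : B,
        Real.exp (t * ρ (Option.elim r istar (fun b => (b:Fin k))) (j:Fin k)) * v (some j)) = 0 := by
      intro r
      have h := hrow r
      rw [univ_option, Finset.sum_insertNone] at h
      simpa [hent] using h
    have hvnone : v none ≠ 0 := by
      intro h0
      have hy : ∃ j : B, v (some j) ≠ 0 := by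
        by_contra hall; push_neg at hall
        apply hv0
        funext c; cases c with
        | none => exact h0
        | some j => exact hall j
      obtain ⟨j0, hj0⟩ := hy
      have hker2 : (Sq t).mulVec (fun j => v (some j)) = 0 := by
        funext b
        have h := hsplit (some b)
        rw [h0, zero_add] at h
        simpa [Matrix.mulVec, dotProduct, hSq] using h
      exact hdt (Matrix.exists_mulVec_eq_zero_iff.mp
        ⟨fun j => v (some j), fun h => hj0 (congrFun h j0), hker2⟩)
    set z : B → ℝ := fun j => -(v (some j)) / v none with hz
    have hz1 : ∀ r : Option B, (∑ j : B,
        Real.exp (t * ρ (Option.elim r istar (fun b => (b:Fin k))) (j:Fin k)) * z j) = 1 := by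
      intro r
      have h := hsplit r
      have h2 : ∑ j : B, Real.exp (t * ρ (Option.elim r istar (fun b => (b:Fin k))) (j:Fin k)) * z j
          = (∑ j : B, Real.exp (t * ρ (Option.elim r istar (fun b => (b:Fin k))) (j:Fin k))
            * v (some j)) * (-1 / v none) := by
        rw [Finset.sum_mul]
        refine Finset.sum_congr rfl fun j _ => ?_
        rw [hz]; field_simp
      rw [h2]
      have h3 : ∑ j : B, Real.exp (t * ρ (Option.elim r istar (fun b => (b:Fin k))) (j:Fin k))
          * v (some j) = - v none := by linarith
      rw [h3]; field_simp
    have hzmul : (Sq t).mulVec z = fun _ => 1 := by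
      funext b
      have h := hz1 (some b)
      simpa [Matrix.mulVec, dotProduct, hSq] using h
    have humul : (Sq t).mulVec (fun j => ((Sq t).det)⁻¹ * (Sq t).cramer 1 j) = fun _ => 1 := by
      have h1 : (fun j => ((Sq t).det)⁻¹ * (Sq t).cramer 1 j) = ((Sq t).det)⁻¹ • ((Sq t).cramer 1) := by
        funext j; simp [smul_eq_mul]
      rw [h1, Matrix.mulVec_smul, Matrix.mulVec_cramer]
      funext b
      simp [smul_eq_mul, inv_mul_cancel₀ hdt]
    have huniq : z = fun j => ((Sq t).det)⁻¹ * (Sq t).cramer 1 j := by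
      set u : B → ℝ := fun j => ((Sq t).det)⁻¹ * (Sq t).cramer 1 j with hu
      have hinv := Matrix.nonsing_inv_mul (Sq t) (isUnit_iff_ne_zero.mpr hdt)
      have e1 : ∀ w : B → ℝ, ((Sq t)⁻¹ * (Sq t)).mulVec w = w := by
        intro w; rw [hinv, Matrix.one_mulVec]
      calc z = ((Sq t)⁻¹ * Sq t).mulVec z := (e1 z).symm
        _ = (Sq t)⁻¹.mulVec ((Sq t).mulVec z) := (Matrix.mulVec_mulVec z ((Sq t)⁻¹) (Sq t)).symm
        _ = (Sq t)⁻¹.mulVec ((Sq t).mulVec u) := by rw [hzmul, humul]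
        _ = ((Sq t)⁻¹ * Sq t).mulVec u := Matrix.mulVec_mulVec u ((Sq t)⁻¹) (Sq t)
        _ = u := e1 u
    have hfin := hz1 none
    rw [huniq] at hfin
    have h2 : ∑ j : B, Real.exp (t * ρ (Option.elim (none : Option B) istar (fun b => (b:Fin k))) (j:Fin k))
        * (((Sq t).det)⁻¹ * (Sq t).cramer 1 j)
        = ((Sq t).det)⁻¹ * ∑ j : B, (Sq t).cramer 1 j * Real.exp (t * ρ istar (j:Fin k)) := by
      rw [Finset.mul_sum]
      refine Finset.sum_congr rfl fun j _ => ?_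
      simp only [Option.elim]
      ring
    rw [h2] at hfin
    field_simp at hfin
    linarith [hfin]
  -- limits give 0 = 1
  have hLHS : Tendsto (fun t => ∑ j : B, (Sq t).cramer 1 j * Real.exp (t * ρ istar (j:Fin k)))
      atBot (𝓝 0) := by
    have h0 : (0:ℝ) = ∑ j : B, 1 * 0 := by simp
    rw [h0]
    apply tendsto_finset_sum
    intro j _
    have hρp : 0 < ρ istar (j:Fin k) := by
      refine lt_of_le_of_ne (hρnn _ _) (fun h => ?_)
      have h2 := (hρzero istar (j:Fin k)).mp h.symm
      rw [h2] at histar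
      exact histar j.2
    have hexp : Tendsto (fun t => Real.exp (t * ρ istar (j:Fin k))) atBot (𝓝 0) :=
      Real.tendsto_exp_atBot.comp ((tendsto_mul_const_atBot_of_pos hρp).mpr tendsto_id)
    exact (hwlim j).mul hexp
  have hcontr := tendsto_nhds_unique (hLHS.congr' hkey) hdlim
  norm_num at hcontr

lemma extract {k : ℕ} (hk : 2 ≤ k) (P : Fin k → ℝ) (ρ : Fin k → Fin k → ℝ)
    (hP : IsPmf P) (hPpos : ∀ i, 0 < P i) {D : ℝ} (hdeg : DegenAt P ρ D) :
    ∃ (l c : ℝ) (Q : Fin k → ℝ), l < 0 ∧ IsPmf Q ∧ 0 < c ∧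
      (∀ i, ∑ j, Q j * Real.exp (l * ρ i j) = c) ∧
      (∀ j, 0 < Q j → Sfun P ρ j l = c) ∧
      (RofD P ρ D = (((l * D - Real.log c)/Real.log 2 : ℝ) : EReal)) := by
  classical
  obtain ⟨Q, hQ, hopt, l, hl, hderiv, htang, c, hrow⟩ := hdeg
  have i0 : Fin k := ⟨0, by omega⟩
  -- positivity of c
  have hQex : ∃ j, 0 < Q j := by
    by_contra hno
    push_neg at hno
    have : ∑ j, Q j ≤ 0 := Finset.sum_nonpos fun j _ => hno j
    rw [hQ.2] at this; linarith
  obtain ⟨j₁, hj₁⟩ := hQex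
  have hc : 0 < c := by
    rw [← hrow i0]
    exact Finset.sum_pos' (fun j _ => mul_nonneg (hQ.1 j) (Real.exp_pos _).le)
      ⟨j₁, Finset.mem_univ j₁, mul_pos hj₁ (Real.exp_pos _)⟩
  have hT : ∀ i, (0:ℝ) < ∑ j, Q j * Real.exp (l * ρ i j) := fun i => by rw [hrow i]; exact hc
  -- Lam value
  have hLam : Lam P ρ Q l = Real.log c := by
    unfold Lam
    calc ∑ i, P i * Real.log (∑ j, Q j * Real.exp (l * ρ i j))
        = ∑ i, P i * Real.log c := by
          refine Finset.sum_congr rfl fun i _ => ?_; rw [hrow i]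
      _ = (∑ i, P i) * Real.log c := by rw [Finset.sum_mul]
      _ = Real.log c := by rw [hP.2, one_mul]
  -- derivative
  have hD1 : HasDerivAt (Lam P ρ Q)
      (∑ i, P i * ((∑ j, Q j * (ρ i j * Real.exp (l * ρ i j)))
        / (∑ j, Q j * Real.exp (l * ρ i j)))) l := by
    have : ∀ i ∈ (univ : Finset (Fin k)), HasDerivAt
        (fun x => P i * Real.log (∑ j, Q j * Real.exp (x * ρ i j)))
        (P i * ((∑ j, Q j * (ρ i j * Real.exp (l * ρ i j)))
          / (∑ j, Q j * Real.exp (l * ρ i j)))) l := by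
      intro i _
      have hg : HasDerivAt (fun x => ∑ j, Q j * Real.exp (x * ρ i j))
          (∑ j, Q j * (ρ i j * Real.exp (l * ρ i j))) l := by
        refine HasDerivAt.fun_sum fun j _ => ?_
        have h1 : HasDerivAt (fun x : ℝ => x * ρ i j) (ρ i j) l := hasDerivAt_mul_const _
        have h2 := h1.exp
        have h3 := h2.const_mul (Q j)
        exact h3.congr_deriv (by ring)
      exact (hg.log (ne_of_gt (hT i))).const_mul (P i)
    have hsum := HasDerivAt.fun_sum this
    exact hsum
  have hDval : D = ∑ i, P i * ((∑ j, Q j * (ρ i j * Real.exp (l * ρ i j))) / c) := by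
    have := hderiv.unique hD1
    simp only [hrow] at this
    exact this
  have hnum : ∑ i, P i * (∑ j, Q j * (ρ i j * Real.exp (l * ρ i j))) = c * D := by
    rw [hDval, Finset.mul_sum]
    refine Finset.sum_congr rfl fun i _ => ?_
    field_simp
    simp only [mul_comm l]
  -- RofD is a real number
  have hlog2 : (0:ℝ) < Real.log 2 := Real.log_pos one_lt_two
  rw [hLam] at htang
  have hne_top : RofD P ρ D ≠ ⊤ := by
    intro h; rw [h, EReal.coe_mul_top_of_pos (by exact_mod_cast hlog2)] at htang
    exact (EReal.coe_ne_top _) htang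
  have hne_bot : RofD P ρ D ≠ ⊥ := by
    intro h; rw [h, EReal.coe_mul_bot_of_pos (by exact_mod_cast hlog2)] at htang
    exact (EReal.coe_ne_bot _) htang
  set x := (RofD P ρ D).toReal with hxdef
  have hxeq : RofD P ρ D = ((x : ℝ) : EReal) := (EReal.coe_toReal hne_top hne_bot).symm
  rw [hxeq, ← EReal.coe_mul] at htang
  have hxval : l * D - Real.log c = Real.log 2 * x := by exact_mod_cast htang
  set r₀ := (l * D - Real.log c)/Real.log 2 with hr₀
  have hRof : RofD P ρ D = ((r₀ : ℝ) : EReal) := by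
    rw [hxeq]; congr 1; rw [hr₀, hxval]; field_simp
  refine ⟨l, c, Q, hl, hQ, hc, hrow, ?_, hRof⟩
  -- now the Gibbs argument
  set W : Fin k → Fin k → ℝ := fun i j => Q j * Real.exp (l * ρ i j) / c with hWdef
  set Qh : Fin k → ℝ := fun j => Q j * Sfun P ρ j l / c with hQhdef
  have hSpos : ∀ j, 0 < Sfun P ρ j l := fun j =>
    Finset.sum_pos' (fun i _ => mul_nonneg (hPpos i).le (Real.exp_pos _).le)
      ⟨i0, Finset.mem_univ i0, mul_pos (hPpos i0) (Real.exp_pos _)⟩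
  have hWnn : ∀ i j, 0 ≤ W i j := fun i j =>
    div_nonneg (mul_nonneg (hQ.1 j) (Real.exp_pos _).le) hc.le
  have hWrow : ∀ i, ∑ j, W i j = 1 := by
    intro i
    rw [show (∑ j, W i j) = (∑ j, Q j * Real.exp (l * ρ i j)) / c from (Finset.sum_div _ _ _).symm,
      hrow i, div_self (ne_of_gt hc)]
  have hdist : ∑ i, ∑ j, P i * W i j * ρ i j = D := by
    have : ∀ i, ∑ j, P i * W i j * ρ i j
        = P i * (∑ j, Q j * (ρ i j * Real.exp (l * ρ i j))) / c := by
      intro i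
      rw [Finset.mul_sum, Finset.sum_div]
      refine Finset.sum_congr rfl fun j _ => ?_
      rw [hWdef]; field_simp
    rw [Finset.sum_congr rfl fun i _ => this i]
    rw [show (∑ i, P i * (∑ j, Q j * (ρ i j * Real.exp (l * ρ i j))) / c)
      = (∑ i, P i * (∑ j, Q j * (ρ i j * Real.exp (l * ρ i j)))) / c from (Finset.sum_div _ _ _).symm]
    rw [hnum]; field_simp
  have hQhnn : ∀ j, 0 ≤ Qh j := fun j =>
    div_nonneg (mul_nonneg (hQ.1 j) (hSpos j).le) hc.le
  have hQhsum : ∑ j, Qh j = 1 := by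
    have hswap : ∑ j, Q j * Sfun P ρ j l = c := by
      unfold Sfun
      rw [show (∑ j, Q j * ∑ i, P i * Real.exp (l * ρ i j))
          = ∑ j, ∑ i, Q j * (P i * Real.exp (l * ρ i j)) from
        Finset.sum_congr rfl fun j _ => Finset.mul_sum _ _ _]
      rw [Finset.sum_comm]
      have : ∀ i, ∑ j, Q j * (P i * Real.exp (l * ρ i j)) = P i * c := by
        intro i
        rw [← hrow i, Finset.mul_sum]
        refine Finset.sum_congr rfl fun j _ => by ring
      rw [Finset.sum_congr rfl fun i _ => this i, ← Finset.sum_mul, hP.2, one_mul]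
    rw [show (∑ j, Qh j) = (∑ j, Q j * Sfun P ρ j l) / c from (Finset.sum_div _ _ _).symm,
      hswap, div_self (ne_of_gt hc)]
  have hmarg : ∀ j, ∑ i, P i * W i j = Qh j := by
    intro j
    rw [hQhdef, hWdef]
    simp only
    rw [show (∑ i, P i * (Q j * Real.exp (l * ρ i j) / c))
        = (∑ i, P i * Real.exp (l * ρ i j)) * Q j / c from ?_]
    · unfold Sfun; ring
    · rw [Finset.sum_mul, Finset.sum_div]
      refine Finset.sum_congr rfl fun i _ => by ring
  -- feasibility and membership
  have hWmem : W ∈ {W : Fin k → Fin k → ℝ | (∀ i j, 0 ≤ W i j) ∧ (∀ i, ∑ j, W i j = 1) ∧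
      ∑ i, ∑ j, P i * W i j * ρ i j ≤ D} := ⟨hWnn, hWrow, le_of_eq hdist⟩
  have hQhmem : Qh ∈ {Q : Fin k → ℝ | IsPmf Q} := ⟨hQhnn, hQhsum⟩
  have hcond : ∀ i j, 0 < W i j → 0 < Qh j := by
    intro i j hW
    have hQj : 0 < Q j := by
      by_contra hq
      push_neg at hq
      have hq0 : Q j = 0 := le_antisymm hq (hQ.1 j)
      rw [hWdef] at hW; simp [hq0] at hW
    exact div_pos (mul_pos hQj (hSpos j)) hc
  set G := ∑ j, Qh j * Real.logb 2 (Q j / Qh j) with hG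
  have hmass : ∑ i, ∑ j, P i * W i j = 1 := by
    have : ∀ i, ∑ j, P i * W i j = P i := by
      intro i
      rw [← Finset.mul_sum, hWrow i, mul_one]
    rw [Finset.sum_congr rfl fun i _ => this i, hP.2]
  have hsplit : ∀ i j, P i * W i j * Real.logb 2 (W i j / Qh j)
      = (l * (P i * W i j * ρ i j) - Real.log c * (P i * W i j)) / Real.log 2
        + P i * W i j * Real.logb 2 (Q j / Qh j) := by
    intro i j
    rcases eq_or_lt_of_le (hQ.1 j) with h0 | h0
    · have hW0 : W i j = 0 := by rw [hWdef]; simp [← h0]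
      simp [hW0]
    · have hWp : 0 < W i j := div_pos (mul_pos h0 (Real.exp_pos _)) hc
      have hQhp : 0 < Qh j := div_pos (mul_pos h0 (hSpos j)) hc
      have hWval : Real.log (W i j) = Real.log (Q j) + l * ρ i j - Real.log c := by
        rw [hWdef]
        simp only
        rw [Real.log_div (by positivity) (ne_of_gt hc),
          Real.log_mul (ne_of_gt h0) (Real.exp_ne_zero _), Real.log_exp]
      rw [Real.logb, Real.logb, Real.log_div (ne_of_gt hWp) (ne_of_gt hQhp),
        Real.log_div (ne_of_gt h0) (ne_of_gt hQhp), hWval]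
      field_simp
      ring
  have hCval : ∑ i, ∑ j, P i * W i j * Real.logb 2 (W i j / Qh j) = r₀ + G := by
    have e0 : ∑ i, ∑ j, P i * W i j * Real.logb 2 (W i j / Qh j)
        = (∑ i, ∑ j, (l * (P i * W i j * ρ i j) - Real.log c * (P i * W i j)) / Real.log 2)
          + ∑ i, ∑ j, P i * W i j * Real.logb 2 (Q j / Qh j) := by
      rw [← Finset.sum_add_distrib]
      refine Finset.sum_congr rfl fun i _ => ?_
      rw [← Finset.sum_add_distrib]
      exact Finset.sum_congr rfl fun j _ => hsplit i j
    have e1 : ∑ i, ∑ j, (l * (P i * W i j * ρ i j) - Real.log c * (P i * W i j)) / Real.log 2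
        = r₀ := by
      have ha : ∀ i, ∑ j, (l * (P i * W i j * ρ i j) - Real.log c * (P i * W i j)) / Real.log 2
          = ((l * ∑ j, P i * W i j * ρ i j) - Real.log c * ∑ j, P i * W i j) / Real.log 2 := by
        intro i
        rw [← Finset.sum_div, Finset.sum_sub_distrib, ← Finset.mul_sum, ← Finset.mul_sum]
      rw [Finset.sum_congr rfl fun i _ => ha i, ← Finset.sum_div, Finset.sum_sub_distrib,
        ← Finset.mul_sum, ← Finset.mul_sum, hdist, hmass, hr₀, mul_one]
    have e2 : ∑ i, ∑ j, P i * W i j * Real.logb 2 (Q j / Qh j) = G := by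
      rw [Finset.sum_comm, hG]
      refine Finset.sum_congr rfl fun j _ => ?_
      rw [← Finset.sum_mul, hmarg j]
    rw [e0, e1, e2]
  have hwC : wCost P Qh W = (((r₀ + G : ℝ)) : EReal) := by
    unfold wCost
    rw [if_pos hcond, hCval]
  have hchain : ((r₀ : ℝ) : EReal) ≤ ((r₀ + G : ℝ) : EReal) := by
    calc ((r₀:ℝ):EReal) = RofD P ρ D := hRof.symm
      _ ≤ RPQ P ρ Qh D := by
          unfold RofD
          exact iInf₂_le Qh hQhmem
      _ ≤ wCost P Qh W := by
          unfold RPQ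
          exact iInf₂_le W hWmem
      _ = _ := hwC
  have hG0 : (0:ℝ) ≤ G := by
    have := EReal.coe_le_coe_iff.mp hchain
    linarith
  have hGibbs : 0 ≤ ∑ j, Qh j * Real.log (Q j / Qh j) := by
    have hGrw : G = (∑ j, Qh j * Real.log (Q j / Qh j)) / Real.log 2 := by
      rw [hG, Finset.sum_div]
      refine Finset.sum_congr rfl fun j _ => ?_
      rw [Real.logb]; ring
    rw [hGrw] at hG0
    rcases div_nonneg_iff.mp hG0 with ⟨h1, _⟩ | ⟨_, h2⟩
    · exact h1
    · linarith
  have hsupp2 : ∀ j, 0 < Qh j → 0 < Q j := by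
    intro j hj
    by_contra hq
    push_neg at hq
    have hq0 : Q j = 0 := le_antisymm hq (hQ.1 j)
    rw [hQhdef] at hj; simp [hq0] at hj
  have hQeq := gibbs_eq hQhnn hQ.1 hQhsum hQ.2 hsupp2 hGibbs
  intro j hQj
  have hj := hQeq j
  rw [hQhdef] at hj
  simp only at hj
  rw [div_eq_iff (ne_of_gt hc)] at hj
  exact mul_left_cancel₀ (ne_of_gt hQj) hj

set_option maxHeartbeats 1000000 in
lemma key_frequently {k : ℕ} (hk : 2 ≤ k) (P : Fin k → ℝ) (ρ : Fin k → Fin k → ℝ)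
    (hP : IsPmf P) (hPpos : ∀ i, 0 < P i)
    (hρnn : ∀ i j, 0 ≤ ρ i j) (hρzero : ∀ i j, ρ i j = 0 ↔ i = j)
    (hconv : StrictConvexOn ℝ (Set.Ioo 0 (Dmax P ρ)) (fun D => (RofD P ρ D).toReal))
    (hinf : {D ∈ Set.Ioo 0 (Dmax P ρ) | DegenAt P ρ D}.Infinite) :
    ∃ᶠ x in atBot, ∃ c : ℝ, ∀ j, Sfun P ρ j x = c := by
  classical
  set S := {D ∈ Set.Ioo 0 (Dmax P ρ) | DegenAt P ρ D} with hSdef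
  haveI hSinf : Infinite ↥S := Set.infinite_coe_iff.mpr hinf
  have hdata : ∀ d : ↥S, ∃ (l c : ℝ) (Q : Fin k → ℝ), l < 0 ∧ IsPmf Q ∧ 0 < c ∧
      (∀ i, ∑ j, Q j * Real.exp (l * ρ i j) = c) ∧
      (∀ j, 0 < Q j → Sfun P ρ j l = c) ∧
      (RofD P ρ (d:ℝ) = (((l * (d:ℝ) - Real.log c)/Real.log 2 : ℝ) : EReal)) :=
    fun d => extract hk P ρ hP hPpos d.2.2
  choose lam cc QQ hlam hQpmf hcpos hrowS hcolS hRval using hdata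
  have hi01 : (⟨0, by omega⟩ : Fin k) ≠ (⟨1, by omega⟩ : Fin k) := by
    intro h; rw [Fin.mk.injEq] at h; omega
  -- minimum off-diagonal distortion
  set Roff : Finset ℝ := ((univ : Finset (Fin k × Fin k)).filter
    (fun p => p.1 ≠ p.2)).image (fun p => ρ p.1 p.2) with hRoff
  have hRoffne : Roff.Nonempty :=
    ⟨ρ ⟨0, by omega⟩ ⟨1, by omega⟩, Finset.mem_image.mpr ⟨(⟨0, by omega⟩, ⟨1, by omega⟩),
      Finset.mem_filter.mpr ⟨Finset.mem_univ _, hi01⟩, rfl⟩⟩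
  set r := Roff.min' hRoffne with hrdef
  have hrpos : 0 < r := by
    have hmem : r ∈ Roff := Roff.min'_mem hRoffne
    obtain ⟨q, hq, hqe⟩ := Finset.mem_image.mp hmem
    have hne := (Finset.mem_filter.mp hq).2
    rw [← hqe]
    exact lt_of_le_of_ne (hρnn _ _) (fun h => hne ((hρzero _ _).mp h.symm))
  have hrle : ∀ i j, i ≠ j → r ≤ ρ i j := fun i j hij =>
    Roff.min'_le _ (Finset.mem_image.mpr ⟨(i,j),
      Finset.mem_filter.mpr ⟨Finset.mem_univ _, hij⟩, rfl⟩)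
  set Lset := Set.range lam with hLdef
  -- Step A : the set of tilts is infinite
  have hLinf : Lset.Infinite := by
    by_contra hfin
    rw [Set.not_infinite] at hfin
    haveI : Finite ↥Lset := hfin.to_subtype
    set V := (fun q : Fin k × ↥Lset => Sfun P ρ q.1 (q.2 : ℝ)) '' Set.univ with hV
    have hVfin : V.Finite := Set.Finite.image _ Set.finite_univ
    haveI : Finite ↥V := hVfin.to_subtype
    have hccV : ∀ d : ↥S, cc d ∈ V := by
      intro d
      obtain ⟨j, hj⟩ := pmf_exists_pos (hQpmf d)
      exact ⟨(j, ⟨lam d, Set.mem_range_self d⟩), Set.mem_univ _, hcolS d j hj⟩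
    set G : ↥S → ↥Lset × ↥V := fun d => (⟨lam d, Set.mem_range_self d⟩, ⟨cc d, hccV d⟩) with hG
    obtain ⟨y, hy⟩ := Finite.exists_infinite_fiber G
    haveI := hy
    set em := Infinite.natEmbedding ↥(G ⁻¹' {y}) with hem
    set dm : ℕ → ↥S := fun m => ((em m : ↥(G ⁻¹' {y})) : ↥S) with hdm
    have hGd : ∀ m : ℕ, G (dm m) = y := fun m => (em m).2
    have hlamm : ∀ m, lam (dm m) = ((y.1 : ℝ)) := by
      intro m
      have := congrArg (fun q : ↥Lset × ↥V => ((q.1 : ℝ))) (hGd m)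
      simpa [hG] using this
    have hccm : ∀ m, cc (dm m) = ((y.2 : ℝ)) := by
      intro m
      have := congrArg (fun q : ↥Lset × ↥V => ((q.2 : ℝ))) (hGd m)
      simpa [hG] using this
    have hDne : ∀ m m' : ℕ, ((dm m : ℝ)) = ((dm m' : ℝ)) → m = m' := by
      intro m m' h
      have h1 : dm m = dm m' := Subtype.ext h
      have h2 : (em m) = (em m') := Subtype.ext h1
      exact em.injective h2
    set pprop : ℝ → Prop := fun x => x ∈ Set.Ioo 0 (Dmax P ρ) ∧
      (RofD P ρ x).toReal = (((y.1 : ℝ)) * x - Real.log ((y.2 : ℝ)))/Real.log 2 with hpp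
    have hpm : ∀ m, pprop ((dm m : ℝ)) := by
      intro m
      refine ⟨(dm m).2.1, ?_⟩
      have h1 := hRval (dm m)
      rw [hlamm m, hccm m] at h1
      rw [h1, EReal.toReal_coe]
    obtain ⟨x, y', z, px, py, pz, hxy, hyz⟩ := exists_ordered
      (fun h => by have := hDne 0 1 h; omega)
      (fun h => by have := hDne 0 2 h; omega)
      (fun h => by have := hDne 1 2 h; omega)
      (hpm 0) (hpm 1) (hpm 2)
    exact no_three_collinear hconv (Real.log_pos one_lt_two) px.1 py.1 pz.1 hxy hyz
      px.2 py.2 pz.2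
  by_cases hbdd : BddBelow Lset
  · -- Case (a) : accumulation point
    obtain ⟨B0, hB0⟩ := hbdd
    set e := hLinf.natEmbedding with he
    set u : ℕ → ℝ := fun n => ((e n : ↥Lset) : ℝ) with hu
    have huinj : Function.Injective u := fun m n h => e.injective (Subtype.ext h)
    have humem : ∀ n, u n ∈ Set.Icc B0 0 := by
      intro n
      refine ⟨hB0 (e n).2, ?_⟩
      obtain ⟨d, hd⟩ := (e n).2
      rw [hu]; simp only
      rw [← hd]
      exact (hlam d).le
    obtain ⟨lstar, _hls, φ, hφ, hφt⟩ :=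
      tendsto_subseq_of_bounded (Metric.isBounded_Icc B0 0) humem
    set v := u ∘ φ with hv
    have hvinj : Function.Injective v := huinj.comp hφ.injective
    have hvne : ∀ᶠ n in atTop, v n ≠ lstar := by
      by_cases hex : ∃ n0, v n0 = lstar
      · obtain ⟨n0, hn0⟩ := hex
        filter_upwards [Filter.eventually_gt_atTop n0] with n hn h
        have h2 : n = n0 := hvinj (h.trans hn0.symm)
        omega
      · push_neg at hex
        exact Filter.Eventually.of_forall hex
    have hvt : Tendsto v atTop (𝓝[≠] lstar) := by
      rw [tendsto_nhdsWithin_iff]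
      exact ⟨hφt, hvne⟩
    have hvL : ∀ n, v n ∈ Lset := fun n => (e (φ n)).2
    choose dn hdn using hvL
    set A : ℕ → Finset (Fin k) := fun n => univ.filter (fun j => 0 < QQ (dn n) j) with hA
    obtain ⟨b₀, hb₀inf⟩ := Finite.exists_infinite_fiber A
    have hpre : A ⁻¹' {b₀} = setOf (fun n => A n = b₀) := by
      rfl
    have hpinf : (setOf (fun n => A n = b₀)).Infinite := by
      rw [← hpre]
      exact Set.infinite_coe_iff.mp hb₀inf
    set ψ := Nat.nth (fun n => A n = b₀) with hψ
    have hψmono : StrictMono ψ := Nat.nth_strictMono hpinf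
    have hψmem : ∀ m, A (ψ m) = b₀ := fun m => Nat.nth_mem_of_infinite hpinf m
    have hwt : Tendsto (fun m => v (ψ m)) atTop (𝓝[≠] lstar) :=
      hvt.comp hψmono.tendsto_atTop
    by_cases hbuniv : b₀ = univ
    · -- full support : identity theorem gives global equality
      have hallzero : ∀ j j' : Fin k, ∀ x : ℝ, Sfun P ρ j x - Sfun P ρ j' x = 0 := by
        intro j j'
        have hfreq : ∃ᶠ zz in 𝓝[≠] lstar, (fun x => Sfun P ρ j x - Sfun P ρ j' x) zz = 0 := by
          apply hwt.frequently
          apply Filter.Frequently.of_forall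
          intro m
          have hjpos : 0 < QQ (dn (ψ m)) j := by
            have hmem : j ∈ A (ψ m) := by rw [hψmem m, hbuniv]; exact Finset.mem_univ j
            exact (Finset.mem_filter.mp hmem).2
          have hj'pos : 0 < QQ (dn (ψ m)) j' := by
            have hmem : j' ∈ A (ψ m) := by rw [hψmem m, hbuniv]; exact Finset.mem_univ j'
            exact (Finset.mem_filter.mp hmem).2
          have e1 := hcolS (dn (ψ m)) j hjpos
          have e2 := hcolS (dn (ψ m)) j' hj'pos
          rw [hdn (ψ m)] at e1 e2
          simp only
          rw [e1, e2, sub_self]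
        intro x
        have := (analytic_Sdiff P ρ j j').eqOn_zero_of_preconnected_of_frequently_eq_zero
          isPreconnected_univ (Set.mem_univ lstar) hfreq (Set.mem_univ x)
        simpa using this
      apply Filter.Frequently.of_forall
      intro x
      refine ⟨Sfun P ρ ⟨0, by omega⟩ x, fun j => ?_⟩
      have := hallzero j ⟨0, by omega⟩ x
      linarith
    · exfalso
      apply no_partial_support ρ hρnn hρzero b₀ hbuniv (fun m => v (ψ m)) lstar hwt
        (fun m j => QQ (dn (ψ m)) j / cc (dn (ψ m)))
      intro m i
      have hset : ∀ j, j ∉ b₀ → QQ (dn (ψ m)) j = 0 := by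
        intro j hj
        rw [← hψmem m, hA] at hj
        simp only [Finset.mem_filter, Finset.mem_univ, true_and, not_lt] at hj
        exact le_antisymm hj ((hQpmf (dn (ψ m))).1 j)
      have hext : ∑ j ∈ b₀, QQ (dn (ψ m)) j / cc (dn (ψ m)) * Real.exp (v (ψ m) * ρ i j)
          = ∑ j, QQ (dn (ψ m)) j / cc (dn (ψ m)) * Real.exp (v (ψ m) * ρ i j) := by
        apply Finset.sum_subset (Finset.subset_univ _)
        intro j _ hj
        rw [hset j hj]; simp
      rw [hext]
      have hrow' := hrowS (dn (ψ m)) i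
      rw [hdn (ψ m)] at hrow'
      rw [show (∑ j, QQ (dn (ψ m)) j / cc (dn (ψ m)) * Real.exp (v (ψ m) * ρ i j))
          = (∑ j, QQ (dn (ψ m)) j * Real.exp (v (ψ m) * ρ i j)) / cc (dn (ψ m)) from by
        rw [Finset.sum_div]; exact Finset.sum_congr rfl fun j _ => by ring]
      rw [hrow', div_self (ne_of_gt (hcpos (dn (ψ m))))]
  · -- Case (b) : tilts unbounded below
    rw [Filter.frequently_atBot]
    intro b
    rw [not_bddBelow_iff] at hbdd
    obtain ⟨l, hlL, hlb⟩ := hbdd (min b (Real.log (1/(k:ℝ)) / r))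
    obtain ⟨d, hd⟩ := hlL
    refine ⟨l, le_of_lt (lt_of_lt_of_le hlb (min_le_left _ _)), ?_⟩
    have hk0 : (0:ℝ) < (k:ℝ) := by
      have : 0 < k := by omega
      exact_mod_cast this
    have hsmall : Real.exp (l * r) < 1/(k:ℝ) := by
      have h1 : l < Real.log (1/(k:ℝ)) / r := lt_of_lt_of_le hlb (min_le_right _ _)
      have h2 : l * r < Real.log (1/(k:ℝ)) := (lt_div_iff₀ hrpos).mp h1
      calc Real.exp (l * r) < Real.exp (Real.log (1/(k:ℝ))) := Real.exp_lt_exp.mpr h2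
        _ = 1/(k:ℝ) := Real.exp_log (by positivity)
    subst hd
    have hQpos := full_support ρ hρzero (hQpmf d) (hlam d) (hrowS d) hrpos hrle hsmall
    exact ⟨cc d, fun j => hcolS d j (hQpos j)⟩

/-- **Corollary 1.** If the rate-distortion function is strictly convex on
`(0, D_max)` and the degeneracy condition holds at infinitely many
`D ∈ (0, D_max)`, then `P` is uniform and `ρ` is a permutation distortion
measure. -/
theorem stmt_2 {k : ℕ} (hk : 2 ≤ k)
    (P : Fin k → ℝ) (ρ : Fin k → Fin k → ℝ)
    (hP : IsPmf P) (hPpos : ∀ i, 0 < P i)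
    (hρnn : ∀ i j, 0 ≤ ρ i j) (hρsym : ∀ i j, ρ i j = ρ j i)
    (hρzero : ∀ i j, ρ i j = 0 ↔ i = j)
    (hDmax : 0 < Dmax P ρ)
    (hconv : StrictConvexOn ℝ (Set.Ioo 0 (Dmax P ρ)) (fun D => (RofD P ρ D).toReal))
    (hinf : {D ∈ Set.Ioo 0 (Dmax P ρ) | DegenAt P ρ D}.Infinite) :
    (∀ i, P i = 1 / (k : ℝ)) ∧ IsPermMeasure ρ := by
  classical
  have hKEY := key_frequently hk P ρ hP hPpos hρnn hρzero hconv hinf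
  set T : Finset ℝ := (univ : Finset (Fin k × Fin k)).image (fun p => ρ p.1 p.2) with hT
  set ν : Fin k → ℝ → ℝ := fun j t => ∑ i ∈ univ.filter (fun i => ρ i j = t), P i with hν
  have hgroup : ∀ (j : Fin k) (x : ℝ), Sfun P ρ j x = ∑ t ∈ T, ν j t * Real.exp (t * x) := by
    intro j x
    unfold Sfun
    exact group_expsum P (fun i => ρ i j) T
      (fun i => Finset.mem_image.mpr ⟨(i,j), Finset.mem_univ _, rfl⟩) x
  have hνeq : ∀ (j j' : Fin k) (t : ℝ), ν j t = ν j' t := by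
    intro j j' t
    have hfreq : ∃ᶠ x in atBot, ∑ t ∈ T, (ν j t - ν j' t) * Real.exp (t * x) = 0 := by
      refine hKEY.mono ?_
      rintro x ⟨c, hc⟩
      have h1 : ∑ t ∈ T, (ν j t - ν j' t) * Real.exp (t * x)
          = Sfun P ρ j x - Sfun P ρ j' x := by
        rw [hgroup j x, hgroup j' x, ← Finset.sum_sub_distrib]
        exact Finset.sum_congr rfl fun t _ => by ring
      rw [h1, hc j, hc j', sub_self]
    by_cases htT : t ∈ T
    · have h2 := expsum_eq_zero T (fun t => ν j t - ν j' t) hfreq t htT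
      linarith
    · have hemp : ∀ j'' : Fin k, univ.filter (fun i => ρ i j'' = t) = ∅ := by
        intro j''
        rw [Finset.filter_eq_empty_iff]
        intro i _ h
        exact htT (Finset.mem_image.mpr ⟨(i,j''), Finset.mem_univ _, h⟩)
      rw [hν]
      simp only
      rw [hemp j, hemp j']
  have hfilter0 : ∀ j : Fin k, univ.filter (fun i => ρ i j = 0) = {j} := by
    intro j
    ext i
    simp [hρzero i j]
  have hPeq : ∀ j j' : Fin k, P j = P j' := by
    intro j j'
    have h := hνeq j j' 0
    rw [hν] at h
    simp only at h
    rw [hfilter0 j, hfilter0 j'] at h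
    simpa using h
  have hk0 : (0:ℝ) < (k:ℝ) := by
    have : 0 < k := by omega
    exact_mod_cast this
  have hPuniform : ∀ i, P i = 1/(k:ℝ) := by
    intro i
    have hsum : ∑ j, P j = (k:ℝ) * P i := by
      rw [Finset.sum_congr rfl (fun j _ => hPeq j i), Finset.sum_const, Finset.card_univ,
        Fintype.card_fin, nsmul_eq_mul]
    rw [hP.2] at hsum
    rw [eq_div_iff (ne_of_gt hk0)]
    linarith
  refine ⟨hPuniform, ?_⟩
  intro i i'
  apply exists_perm_of_fiber_card
  intro t
  have hswap : ∀ a : Fin k, (univ.filter (fun j => ρ a j = t))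
      = (univ.filter (fun j => ρ j a = t)) := by
    intro a
    apply Finset.filter_congr
    intro j _
    rw [hρsym a j]
  have hcard : ∀ a : Fin k, ((univ.filter (fun i2 => ρ i2 a = t)).card : ℝ) * (1/(k:ℝ))
      = ν a t := by
    intro a
    rw [hν]
    simp only
    rw [Finset.sum_congr rfl (fun i2 _ => hPuniform i2), Finset.sum_const, nsmul_eq_mul]
  have hcc := hνeq i i' t
  rw [← hcard i, ← hcard i'] at hcc
  have hcards : ((univ.filter (fun j => ρ j i = t)).card : ℝ)
      = ((univ.filter (fun j => ρ j i' = t)).card : ℝ) :=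
    mul_right_cancel₀ (by positivity : (1/(k:ℝ)) ≠ 0) hcc
  rw [hswap i, hswap i']
  exact_mod_cast hcards
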